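/- Let d ≥ 2. Let P_s = (1_{d²} + F)/2 (the projection onto the symmetric subspace), and for 0 ≤ i < j ≤ d−1 let w_{ij} : Fin d × Fin d → ℂ be the vector with value 1/√2 at (i,j), value −1/√2 at (j,i), and 0 elsewhere. Set K = P_s + ∑_{1 ≤ i < j ≤ d−1} Matrix.vecMulVec w_{ij} (star w_{ij}) (the orthogonal projection onto the kernel of the complementary Werner–Holevo channel applied to |0⟩⟨0|). Then trace(K * (1_{d²} − F)) = (d−1)·(d−2). -/

import Mathlib

open Matrix

/-- The flip (swap) operator on `ℂ^d ⊗ ℂ^d`. -/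
def flipOp (d : ℕ) : Matrix (Fin d × Fin d) (Fin d × Fin d) ℂ :=
  Matrix.of fun p q => if p.1 = q.2 ∧ p.2 = q.1 then 1 else 0

lemma flipOp_sq (d : ℕ) : flipOp d * flipOp d = 1 := by
  ext ⟨i, j⟩ ⟨k, l⟩
  simp [Matrix.mul_apply, flipOp, Fintype.sum_prod_type, Matrix.one_apply, Prod.ext_iff,
    ite_and, Finset.sum_ite_eq, Finset.sum_ite_eq', eq_comm]

lemma trace_term {d : ℕ} (w : Fin d → Fin d → Fin d × Fin d → ℂ)
    (hw : ∀ i j p, w i j p =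
      if p = (i, j) then ((Real.sqrt 2 : ℝ) : ℂ)⁻¹
      else if p = (j, i) then -((Real.sqrt 2 : ℝ) : ℂ)⁻¹
      else 0) (i j : Fin d) (hij : i ≠ j) :
    (Matrix.vecMulVec (w i j) (star (w i j)) * (1 - flipOp d)).trace = 2 := by
  set c : ℂ := ((Real.sqrt 2 : ℝ) : ℂ)⁻¹ with hc
  have hcc : c * c = 1 / 2 := by
    rw [hc, ← mul_inv, ← Complex.ofReal_mul,
      Real.mul_self_sqrt (by norm_num : (0:ℝ) ≤ 2)]
    norm_num
  have hconj : (starRingEnd ℂ) c = c := by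
    rw [hc, ← Complex.ofReal_inv, Complex.conj_ofReal]
  have hji : ((j, i) : Fin d × Fin d) ≠ (i, j) := by
    simp [Prod.ext_iff]; intro h; exact absurd h.symm hij
  rw [Matrix.mul_sub, Matrix.mul_one, Matrix.trace_sub]
  have h1 : (Matrix.vecMulVec (w i j) (star (w i j))).trace = 1 := by
    rw [Matrix.trace]
    have : ∀ p : Fin d × Fin d, (Matrix.vecMulVec (w i j) (star (w i j))).diag p =
        (if p = ((i, j) : Fin d × Fin d) then c * c else 0) +
        (if p = ((j, i) : Fin d × Fin d) then c * c else 0) := by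
      intro p
      simp only [Matrix.diag, Matrix.vecMulVec_apply, Pi.star_apply, hw, RCLike.star_def]
      split_ifs with h1 h2 <;> simp_all [hconj]
    rw [Finset.sum_congr rfl fun p _ => this p, Finset.sum_add_distrib]
    simp [Finset.sum_ite_eq', hcc]
    norm_num
  have h2 : (Matrix.vecMulVec (w i j) (star (w i j)) * flipOp d).trace = -1 := by
    rw [Matrix.trace]
    have key : ∀ p : Fin d × Fin d, (Matrix.vecMulVec (w i j) (star (w i j)) * flipOp d).diag p =
        w i j p * (starRingEnd ℂ) (w i j (p.2, p.1)) := by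
      intro p
      simp only [Matrix.diag, Matrix.mul_apply, Matrix.vecMulVec_apply, Pi.star_apply,
        flipOp, Matrix.of_apply, RCLike.star_def]
      have : ∀ q : Fin d × Fin d, (q.1 = p.2 ∧ q.2 = p.1) ↔ q = (p.2, p.1) := by
        intro q; simp [Prod.ext_iff]
      simp only [this, mul_ite, mul_one, mul_zero, Finset.sum_ite_eq', Finset.mem_univ, if_true]
    have : ∀ p : Fin d × Fin d, w i j p * (starRingEnd ℂ) (w i j (p.2, p.1)) =
        (if p = ((i, j) : Fin d × Fin d) then -(c * c) else 0) +
        (if p = ((j, i) : Fin d × Fin d) then -(c * c) else 0) := by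
      intro p
      simp only [hw]
      rcases eq_or_ne p ((i, j) : Fin d × Fin d) with h | h
      · subst h; simp [hji, hconj, Prod.ext_iff, hij, hij.symm]
      rcases eq_or_ne p ((j, i) : Fin d × Fin d) with h' | h'
      · subst h'; simp [hji, hconj, Prod.ext_iff, hij, hij.symm, h]
      · have hp1 : p ≠ (i, j) := h
        have hp2 : ((p.2 : Fin d), (p.1 : Fin d)) ≠ ((i, j) : Fin d × Fin d) := by
          simp only [ne_eq, Prod.mk.injEq, not_and, Prod.ext_iff] at h' ⊢; tauto
        have hp3 : ((p.2 : Fin d), (p.1 : Fin d)) ≠ ((j, i) : Fin d × Fin d) := by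
          simp only [ne_eq, Prod.mk.injEq, not_and, Prod.ext_iff] at h ⊢; tauto
        simp [hp1, h', hp2, hp3]
    rw [Finset.sum_congr rfl fun p _ => (key p).trans (this p), Finset.sum_add_distrib]
    simp [Finset.sum_ite_eq', hcc]
    norm_num
  rw [h1, h2]; norm_num

lemma count_lemma {d : ℕ} (hd : 2 ≤ d) :
    2 * (∑ i ∈ Finset.univ.filter (fun i : Fin d => (i : ℕ) ≠ 0), (Finset.Ioi i).card)
      = (d - 1) * (d - 2) := by
  haveI : NeZero d := ⟨by omega⟩
  have hfilter : Finset.univ.filter (fun i : Fin d => (i : ℕ) ≠ 0)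
      = Finset.univ.erase (0 : Fin d) := by
    ext i
    simp [Finset.mem_erase, Fin.ext_iff, -Fin.val_eq_zero_iff]
  rw [hfilter]
  have hcard : ∀ i : Fin d, (Finset.Ioi i).card = d - 1 - i := fun i => Fin.card_Ioi i
  have htot : ∑ i : Fin d, (Finset.Ioi i).card = ∑ k ∈ Finset.range d, k := by
    simp only [hcard]
    rw [Fin.sum_univ_eq_sum_range (fun k => d - 1 - k)]
    exact Finset.sum_range_reflect (fun k => k) d
  have hgauss : (∑ k ∈ Finset.range d, k) * 2 = d * (d - 1) := Finset.sum_range_id_mul_two d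
  have h00 : ((Finset.Ioi (0 : Fin d)).card) = d - 1 := by
    rw [hcard]; simp
  have hsum : (∑ i ∈ Finset.univ.erase (0 : Fin d), (Finset.Ioi i).card) + (d - 1)
      = ∑ k ∈ Finset.range d, k := by
    have h := Finset.sum_erase_add Finset.univ (fun i : Fin d => (Finset.Ioi i).card)
      (Finset.mem_univ (0 : Fin d))
    simpa only [h00, htot] using h
  obtain ⟨e, rfl⟩ : ∃ e, d = e + 2 := ⟨d - 2, by omega⟩
  have hexp : (e + 2) * (e + 2 - 1) = (e + 2 - 1) * (e + 2 - 2) + 2 * (e + 1) := by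
    simp only [Nat.add_sub_cancel]
    ring_nf
    omega
  omega

theorem stmt14 {d : ℕ} (hd : 2 ≤ d)
    (w : Fin d → Fin d → Fin d × Fin d → ℂ)
    (hw : ∀ i j p, w i j p =
      if p = (i, j) then ((Real.sqrt 2 : ℝ) : ℂ)⁻¹
      else if p = (j, i) then -((Real.sqrt 2 : ℝ) : ℂ)⁻¹
      else 0)
    (K : Matrix (Fin d × Fin d) (Fin d × Fin d) ℂ)
    (hK : K = (1 / 2 : ℂ) • (1 + flipOp d) +
      ∑ i ∈ Finset.univ.filter (fun i : Fin d => (i : ℕ) ≠ 0),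
        ∑ j ∈ Finset.Ioi i, Matrix.vecMulVec (w i j) (star (w i j))) :
    (K * (1 - flipOp d)).trace = ((d : ℂ) - 1) * ((d : ℂ) - 2) := by
  have hPs : ((1 / 2 : ℂ) • (1 + flipOp d)) * (1 - flipOp d) = 0 := by
    rw [Matrix.smul_mul]
    have : (1 + flipOp d) * (1 - flipOp d) = 0 := by
      rw [Matrix.add_mul, Matrix.one_mul, Matrix.mul_sub, Matrix.mul_one, flipOp_sq]
      abel
    rw [this, smul_zero]
  rw [hK, Matrix.add_mul, hPs, zero_add, Finset.sum_mul, Matrix.trace_sum]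
  have hstep : (∑ i ∈ Finset.univ.filter (fun i : Fin d => (i : ℕ) ≠ 0),
      ((∑ j ∈ Finset.Ioi i, Matrix.vecMulVec (w i j) (star (w i j))) * (1 - flipOp d)).trace)
      = ∑ i ∈ Finset.univ.filter (fun i : Fin d => (i : ℕ) ≠ 0),
        (((Finset.Ioi i).card : ℂ) * 2) := by
    refine Finset.sum_congr rfl fun i hi => ?_
    rw [Finset.sum_mul, Matrix.trace_sum,
      Finset.sum_congr rfl fun j hj => trace_term w hw i j (Finset.mem_Ioi.mp hj).ne,
      Finset.sum_const, nsmul_eq_mul]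
  rw [hstep, ← Finset.sum_mul, ← Nat.cast_sum]
  have h2N := count_lemma (d := d) hd
  calc ((∑ i ∈ Finset.univ.filter (fun i : Fin d => (i : ℕ) ≠ 0),
        (Finset.Ioi i).card : ℕ) : ℂ) * 2
      = ((2 * ∑ i ∈ Finset.univ.filter (fun i : Fin d => (i : ℕ) ≠ 0),
        (Finset.Ioi i).card : ℕ) : ℂ) := by push_cast; ring
    _ = (((d - 1) * (d - 2) : ℕ) : ℂ) := by rw [h2N]
    _ = ((d : ℂ) - 1) * ((d : ℂ) - 2) := by
        push_cast [Nat.cast_sub (by omega : 1 ≤ d), Nat.cast_sub (by omega : 2 ≤ d)]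
        ring
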